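/- Let k be a field of characteristic ≠ 2, (P, ⊥) a poset with an order-reversing involution, and ψ an indecomposable linear representation of P in a finite-dimensional k-vector space V. Then ψ is isomorphic to its dual representation ψ* if and only if there exists a compatible form for ψ. -/

import Mathlib

open Module Submodule LinearMap

section Aux

variable {k V : Type*} [Field k] [AddCommGroup V] [Module k V] [FiniteDimensional k V]

lemma myFinrankMapInj {W : Type*} [AddCommGroup W] [Module k W]
    (L : V →ₗ[k] W) (hL : Function.Injective L)
    (p : Submodule k V) : finrank k (p.map L) = finrank k p :=
  ((p.equivMapOfInjective L hL).finrank_eq).symm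

lemma myFinrankAnn (W : Submodule k V) :
    finrank k W.dualAnnihilator = finrank k V - finrank k W := by
  have h1 : finrank k W.dualAnnihilator = finrank k (V ⧸ W) := by
    rw [← (Submodule.dualQuotEquivDualAnnihilator W).finrank_eq, Subspace.dual_finrank_eq]
  have h2 := W.finrank_quotient_add_finrank
  omega

/-- Fitting-type dichotomy for endomorphisms preserving all subspaces `ψ p` of an
indecomposable representation. -/
lemma myInjOrNilp {P : Type*} (ψ : P → Submodule k V)
    (hindec : ∀ U' U'' : Submodule k V, IsCompl U' U'' →
      (∀ p, ψ p = (ψ p ⊓ U') ⊔ (ψ p ⊓ U'')) → U' = ⊥ ∨ U'' = ⊥)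
    (e : V →ₗ[k] V) (he : ∀ p, ∀ x ∈ ψ p, e x ∈ ψ p) :
    Function.Injective e ∨ IsNilpotent e := by
  obtain ⟨n, hn⟩ := Filter.eventually_atTop.mp
    ((e.eventually_isCompl_ker_pow_range_pow).and
      ((e.eventually_iSup_ker_pow_eq).and (e.eventually_iInf_range_pow_eq)))
  set N := max n 1 with hNdef
  have hN1 : 1 ≤ N := le_max_right _ _
  have hNn : n ≤ N := le_max_left _ _
  obtain ⟨hcompl, hker, hrange⟩ := hn N hNn
  have hdecomp : ∀ p, ψ p = (ψ p ⊓ LinearMap.ker (e ^ N)) ⊔ (ψ p ⊓ LinearMap.range (e ^ N)) := by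
    intro p
    refine le_antisymm ?_ (sup_le inf_le_left inf_le_left)
    have hp : ∀ x ∈ ψ p, e x ∈ ψ p := he p
    set ep : ψ p →ₗ[k] ψ p := e.restrict hp with hepdef
    obtain ⟨m0, hm0⟩ := Filter.eventually_atTop.mp (ep.eventually_isCompl_ker_pow_range_pow)
    set m := max m0 N with hmdef
    have hcm := hm0 m (le_max_left _ _)
    obtain ⟨-, hkm, hrm⟩ := hn m (hNn.trans (le_max_right _ _))
    have hkeq : LinearMap.ker (e ^ m) = LinearMap.ker (e ^ N) := by rw [← hkm, hker]
    have hreq : LinearMap.range (e ^ m) = LinearMap.range (e ^ N) := by rw [← hrm, hrange]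
    intro x hx
    have hx' : (⟨x, hx⟩ : ψ p) ∈ LinearMap.ker (ep ^ m) ⊔ LinearMap.range (ep ^ m) := by
      rw [hcm.codisjoint.eq_top]; trivial
    obtain ⟨a, ha, b, hb, hab⟩ := Submodule.mem_sup.mp hx'
    have hpow : (ep ^ m) = (e ^ m).restrict (Module.End.pow_apply_mem_of_forall_mem m hp) :=
      Module.End.pow_restrict m hp
    have haK : (a : V) ∈ LinearMap.ker (e ^ N) := by
      rw [← hkeq, LinearMap.mem_ker]
      have h1 := LinearMap.mem_ker.mp ha
      rw [hpow] at h1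
      have h2 := congrArg (Subtype.val) h1
      simpa [LinearMap.restrict_coe_apply] using h2
    have hbI : (b : V) ∈ LinearMap.range (e ^ N) := by
      rw [← hreq]
      obtain ⟨c, hc⟩ := hb
      rw [hpow] at hc
      exact ⟨(c : V), by simpa [LinearMap.restrict_coe_apply] using congrArg Subtype.val hc⟩
    have hxab : x = (a : V) + (b : V) := by
      have := congrArg Subtype.val hab; simpa using this.symm
    rw [hxab]
    exact Submodule.add_mem_sup ⟨a.2, haK⟩ ⟨b.2, hbI⟩
  rcases hindec _ _ hcompl hdecomp with hK | hI
  · left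
    have h1 : LinearMap.ker e ≤ LinearMap.ker (e ^ N) := by
      intro x hx
      obtain ⟨N', hN'⟩ : ∃ N', N = N' + 1 := ⟨N - 1, (Nat.succ_pred_eq_of_pos hN1).symm⟩
      rw [LinearMap.mem_ker, hN', pow_succ, Module.End.mul_apply, LinearMap.mem_ker.mp hx,
        map_zero]
    rw [hK, le_bot_iff] at h1
    exact LinearMap.ker_eq_bot.mp h1
  · right
    exact ⟨N, LinearMap.range_eq_bot.mp hI⟩

/-- From an injective map to the dual realizing the self-duality, we get the
compatibility condition in the "orthogonality" form. -/
lemma myCompat {P : Type*} (invol : P → P) (hinv : Function.Involutive invol)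
    (ψ : P → Submodule k V) (C : V →ₗ[k] Module.Dual k V)
    (hCinj : Function.Injective C)
    (hC : ∀ p, (ψ p).map C = (ψ (invol p)).dualAnnihilator) :
    ∀ p (v : V), v ∈ ψ (invol p) ↔ ∀ w ∈ ψ p, C v w = 0 := by
  intro p v
  constructor
  · intro hv w hw
    have h1 : C v ∈ (ψ (invol (invol p))).dualAnnihilator := by
      rw [← hC (invol p)]; exact ⟨v, hv, rfl⟩
    rw [hinv p] at h1
    exact (Submodule.mem_dualAnnihilator _).mp h1 w hw
  · intro hv
    have h1 : C v ∈ (ψ p).dualAnnihilator := (Submodule.mem_dualAnnihilator _).mpr hv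
    rw [← hinv p, ← hC (invol p)] at h1
    obtain ⟨u, hu, huv⟩ := h1
    rwa [← hCinj huv]

end Aux

/-- Let `k` be a field of characteristic `≠ 2`, `(P, ⊥)` a poset with
an order-reversing involution, and `ψ` an indecomposable linear representation of `P`
in a finite-dimensional `k`-vector space `V`.  Then `ψ` is isomorphic to its dual
representation `ψ*` (given by `ψ*(p) = (ψ(p^⊥))°` in `V*`) if and only if there exists
a compatible form for `ψ`, i.e. a nondegenerate bilinear form `B` on `V`, symmetric or
alternating, such that for every `p` the `B`-orthogonal of `ψ(p)` equals `ψ(p^⊥)`. -/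
theorem selfdual_iff_compatible_form
    {k V P : Type*} [Field k] [AddCommGroup V] [Module k V] [FiniteDimensional k V]
    [PartialOrder P] (h2 : (2 : k) ≠ 0) [Nontrivial V]
    (invol : P → P) (hinv : Function.Involutive invol) (hanti : Antitone invol)
    (ψ : P → Submodule k V) (hmono : Monotone ψ)
    (hindec : ∀ U' U'' : Submodule k V, IsCompl U' U'' →
      (∀ p, ψ p = (ψ p ⊓ U') ⊔ (ψ p ⊓ U'')) → U' = ⊥ ∨ U'' = ⊥) :
    (∃ g : V ≃ₗ[k] Module.Dual k V,
        ∀ p, (ψ p).map (g : V →ₗ[k] Module.Dual k V) = (ψ (invol p)).dualAnnihilator)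
    ↔ (∃ B : LinearMap.BilinForm k V, LinearMap.BilinForm.Nondegenerate B ∧
        (LinearMap.IsSymm B ∨ LinearMap.IsAlt B) ∧
        ∀ p, ∀ v : V, v ∈ ψ (invol p) ↔ ∀ w ∈ ψ p, B v w = 0) := by
  constructor
  · rintro ⟨g, hg⟩
    set G : V →ₗ[k] Module.Dual k V := ↑g with hGdef
    have hGinj : Function.Injective G := g.injective
    set Gf : V →ₗ[k] Module.Dual k V := G.flip with hGfdef
    have hGf_apply : ∀ v w : V, Gf v w = G w v := fun _ _ => rfl
    have hGfinj : Function.Injective Gf := by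
      intro v w h
      rw [← sub_eq_zero]
      have h0 : Gf (v - w) = 0 := by rw [map_sub, h, sub_self]
      rw [← Module.forall_dual_apply_eq_zero_iff k (v - w)]
      intro φ
      have h1 : Gf (v - w) (g.symm φ) = 0 := by rw [h0]; rfl
      rw [hGf_apply] at h1
      simpa [hGdef] using h1
    have hfr : ∀ q, finrank k (ψ (invol q)).dualAnnihilator = finrank k (ψ q) := by
      intro q
      rw [← hg q, myFinrankMapInj G hGinj]
    have hGf : ∀ p, (ψ p).map Gf = (ψ (invol p)).dualAnnihilator := by
      intro p
      apply Submodule.eq_of_le_of_finrank_eq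
      · rintro _ ⟨v, hv, rfl⟩
        rw [Submodule.mem_dualAnnihilator]
        intro w hw
        have h1 : G w ∈ (ψ (invol (invol p))).dualAnnihilator := by
          rw [← hg (invol p)]; exact ⟨w, hw, rfl⟩
        rw [hinv p] at h1
        exact (Submodule.mem_dualAnnihilator _).mp h1 v hv
      · rw [myFinrankMapInj Gf hGfinj, hfr p]
    set f : V →ₗ[k] V := (g.symm : Module.Dual k V →ₗ[k] V) ∘ₗ Gf with hfdef
    have hfmap : ∀ p, (ψ p).map f = ψ p := by
      intro p
      have hid : ((g.symm : Module.Dual k V →ₗ[k] V) ∘ₗ G) = LinearMap.id := by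
        ext x; simp [hGdef]
      rw [hfdef, Submodule.map_comp, hGf p, ← hg p, ← Submodule.map_comp, hid,
        Submodule.map_id]
    have hfmem : ∀ p, ∀ x ∈ ψ p, f x ∈ ψ p := by
      intro p x hx
      have : f x ∈ (ψ p).map f := Submodule.mem_map_of_mem hx
      rwa [hfmap p] at this
    have hepres : ∀ p, ∀ x ∈ ψ p, ((1 : Module.End k V) + f) x ∈ ψ p := by
      intro p x hx
      have : ((1 : Module.End k V) + f) x = x + f x := rfl
      rw [this]
      exact (ψ p).add_mem hx (hfmem p x hx)
    have hmpres : ∀ p, ∀ x ∈ ψ p, ((1 : Module.End k V) - f) x ∈ ψ p := by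
      intro p x hx
      have : ((1 : Module.End k V) - f) x = x - f x := rfl
      rw [this]
      exact (ψ p).sub_mem hx (hfmem p x hx)
    have hinj : Function.Injective ((1 : Module.End k V) + f)
        ∨ Function.Injective ((1 : Module.End k V) - f) := by
      rcases myInjOrNilp ψ hindec _ hepres with h1 | hn1
      · exact Or.inl h1
      rcases myInjOrNilp ψ hindec _ hmpres with h1 | hn2
      · exact Or.inr h1
      exfalso
      have hc : Commute ((1 : Module.End k V) + f) ((1 : Module.End k V) - f) := by
        unfold Commute SemiconjBy
        noncomm_ring
      have hnilp : IsNilpotent (((1 : Module.End k V) + f) + ((1 : Module.End k V) - f)) :=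
        hc.isNilpotent_add hn1 hn2
      have hsum : (((1 : Module.End k V) + f) + ((1 : Module.End k V) - f))
          = algebraMap k (Module.End k V) 2 := by
        rw [map_ofNat, add_add_sub_cancel, one_add_one_eq_two]
      obtain ⟨m, hm⟩ := hnilp
      rw [hsum, ← map_pow] at hm
      obtain ⟨v, hv⟩ := exists_ne (0 : V)
      have hmv := congrArg (fun (L : Module.End k V) => L v) hm
      simp only [Module.algebraMap_end_apply, LinearMap.zero_apply] at hmv
      exact hv ((smul_eq_zero.mp hmv).resolve_left (pow_ne_zero m h2))
    -- common construction
    have build : ∀ e : Module.End k V, Function.Injective e →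
        (∀ p, ∀ x ∈ ψ p, e x ∈ ψ p) →
        ∀ C : V →ₗ[k] Module.Dual k V, C = G ∘ₗ e →
        Function.Injective C ∧ ∀ p, (ψ p).map C = (ψ (invol p)).dualAnnihilator := by
      intro e heinj hepr C hCe
      have hCinj : Function.Injective C := by
        rw [hCe, LinearMap.coe_comp]
        exact hGinj.comp heinj
      refine ⟨hCinj, fun p => ?_⟩
      have hemap : (ψ p).map (e : V →ₗ[k] V) = ψ p := by
        apply Submodule.eq_of_le_of_finrank_eq
        · rintro _ ⟨x, hx, rfl⟩
          exact hepr p x hx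
        · exact myFinrankMapInj _ heinj _
      rw [hCe, Submodule.map_comp, hemap, hg p]
    rcases hinj with hi | hi
    · have hCe : (G + Gf) = G ∘ₗ ((1 : Module.End k V) + f) := by
        ext v
        simp [hfdef, hGdef]
      obtain ⟨hCinj, hCmap⟩ := build _ hi hepres _ hCe
      refine ⟨G + Gf, ?_, Or.inl ?_, myCompat invol hinv ψ _ hCinj hCmap⟩
      · refine LinearMap.BilinForm.Nondegenerate.ofSeparatingLeft fun v hv => ?_
        have hC0 : (G + Gf) v = 0 := LinearMap.ext hv
        exact hCinj (hC0.trans (map_zero _).symm)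
      · refine ⟨fun x y => ?_⟩
        simp only [LinearMap.add_apply, RingHom.id_apply]
        exact add_comm _ _
    · have hCe : (G - Gf) = G ∘ₗ ((1 : Module.End k V) - f) := by
        ext v
        simp [hfdef, hGdef]
      obtain ⟨hCinj, hCmap⟩ := build _ hi hmpres _ hCe
      refine ⟨G - Gf, ?_, Or.inr ?_, myCompat invol hinv ψ _ hCinj hCmap⟩
      · refine LinearMap.BilinForm.Nondegenerate.ofSeparatingLeft fun v hv => ?_
        have hC0 : (G - Gf) v = 0 := LinearMap.ext hv
        exact hCinj (hC0.trans (map_zero _).symm)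
      · intro x
        simp only [LinearMap.sub_apply]
        exact sub_self _
  · rintro ⟨B, hBnd, hBsa, hBcomp⟩
    have hBinj : Function.Injective (B : V →ₗ[k] Module.Dual k V) := by
      rw [← LinearMap.ker_eq_bot]
      exact hBnd.ker_eq_bot
    set g := LinearMap.BilinForm.toDual B hBnd with hgdef
    have hgcoe : (g : V →ₗ[k] Module.Dual k V) = B := rfl
    refine ⟨g, ?_⟩
    intro p
    rw [hgcoe]
    have hsk : ∀ v w : V, B w v = 0 → B v w = 0 := by
      rcases hBsa with h | h
      · intro v w hw
        have h1 := h.eq v w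
        simp only [RingHom.id_apply] at h1
        rw [h1]; exact hw
      · intro v w hw
        have h1 := h.neg w v
        rw [← h1, hw, neg_zero]
    have hann : ψ (invol p) = ((ψ p).dualAnnihilator).comap (B : V →ₗ[k] Module.Dual k V) := by
      ext v
      rw [Submodule.mem_comap, Submodule.mem_dualAnnihilator]
      exact hBcomp p v
    have hfr1 : finrank k (ψ (invol p)) = finrank k V - finrank k (ψ p) := by
      rw [hann, ← hgcoe, Submodule.comap_equiv_eq_map_symm,
        LinearEquiv.finrank_map_eq, myFinrankAnn]
    apply Submodule.eq_of_le_of_finrank_eq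
    · rintro _ ⟨v, hv, rfl⟩
      rw [Submodule.mem_dualAnnihilator]
      intro w hw
      exact hsk v w ((hBcomp p w).mp hw v hv)
    · rw [myFinrankMapInj _ hBinj, myFinrankAnn, hfr1]
      have := Submodule.finrank_le (ψ p)
      omega
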